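/- arXiv:1902.06902 — 5 statements merged into one kernel-verified Lean document; each statement's English description precedes it below -/
import Mathlib

section
/- Let $P = \mathbb{F}_2[x_1, x_2, \ldots]$ with the derivation $d(x_1)=0$, $d(x_i) = x_1 x_{i-1}^2$ for $i>1$. Then $x_1^2 x_3 + x_2^3$ is not a boundary: there is no $z \in P$ with $d(z) = x_1^2 x_3 + x_2^3$. -/
open MvPolynomial

/-- `P = 𝔽₂[x₁, x₂, …]`; the variable `X n` represents `x_{n+1}`. -/
abbrev PP : Type := MvPolynomial ℕ (ZMod 2)

/-- `x₁² x₃ + x₂³` is not a boundary for Mahowald's differential. -/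
theorem mahowald_not_boundary
    (d : Derivation (ZMod 2) PP PP)
    (h1 : d (X 0) = 0)
    (hs : ∀ n : ℕ, d (X (n + 1)) = X 0 * (X n) ^ 2) :
    ¬ ∃ z : PP, d z = (X 0) ^ 2 * X 2 + (X 1) ^ 3 := by
  rintro ⟨z, hz⟩
  set D : Derivation (ZMod 2) PP PP :=
    MvPolynomial.mkDerivation (ZMod 2)
      (fun n => Nat.rec 0 (fun k _ => (X k) ^ 2) n) with hD
  have hd : d = (X 0 : PP) • D := by
    apply MvPolynomial.derivation_ext
    intro i
    cases i with
    | zero => simp [h1, hD, MvPolynomial.mkDerivation_X]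
    | succ n => simp [hs, hD, MvPolynomial.mkDerivation_X, smul_eq_mul]
  have hz' : (X 0 : PP) * D z = X 0 ^ 2 * X 2 + X 1 ^ 3 := by
    rw [hd] at hz
    simpa [smul_eq_mul] using hz
  have h := congrArg (aeval (fun n : ℕ => if n = 0 then 0 else (X n : PP))) hz'
  simp [aeval_X] at h
  exact pow_ne_zero 3 (X_ne_zero 1) h.symm
end

section
/- Let $P = \mathbb{F}_2[x_1, x_2, \ldots]$ with the derivation $d(x_1)=0$, $d(x_i)=x_1 x_{i-1}^2$ for $i>1$. Then for every $n \geq 1$, the monomial $x_1^n$ is a cycle, and $x_1^n$ is a boundary if and only if $n \geq 3$. -/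
open MvPolynomial

lemma coeff_d_low (d : Derivation (ZMod 2) PP PP)
    (h1 : d (X 0) = 0)
    (hs : ∀ n : ℕ, d (X (n + 1)) = X 0 * (X n) ^ 2) (p : PP) :
    ∀ k : ℕ, k ≤ 2 → coeff (Finsupp.single 0 k) (d p) = 0 := by
  induction p using MvPolynomial.induction_on with
  | C a =>
      intro k hk
      simp [← MvPolynomial.algebraMap_eq]
  | add p q hp hq =>
      intro k hk
      simp [map_add, hp k hk, hq k hk]
  | mul_X p i hp =>
      intro k hk
      rw [d.leibniz, smul_eq_mul, smul_eq_mul, coeff_add]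
      cases i with
      | zero =>
          rw [h1, mul_zero, coeff_zero, zero_add]
          have hX : (X 0 : PP) = monomial (Finsupp.single 0 1) 1 := by
            rw [← X_pow_eq_monomial, pow_one]
          rw [hX, coeff_monomial_mul']
          by_cases hle : Finsupp.single 0 1 ≤ Finsupp.single 0 k
          · rw [if_pos hle]
            have h1k : 1 ≤ k := by
              simpa [Finsupp.single_le_iff] using hle
            have : Finsupp.single 0 k - Finsupp.single 0 1
                = Finsupp.single (0 : ℕ) (k - 1) := by
              ext j
              by_cases hj : j = 0 <;> simp [Finsupp.single_apply, hj]
            rw [this, hp (k - 1) (by omega), mul_zero]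
          · rw [if_neg hle]
      | succ n =>
          have hmon : (X 0 * (X n : PP) ^ 2)
              = monomial (Finsupp.single 0 1 + Finsupp.single n 2) 1 := by
            have hX0 : (X 0 : PP) = monomial (Finsupp.single 0 1) 1 := by
              rw [← X_pow_eq_monomial, pow_one]
            rw [hX0, X_pow_eq_monomial, monomial_mul, one_mul]
          rw [hs n, hmon, coeff_mul_monomial']
          have hle : ¬ (Finsupp.single 0 1 + Finsupp.single n 2
              ≤ Finsupp.single (0 : ℕ) k) := by
            intro hle
            have h0 := hle 0
            have hn := hle n
            by_cases hn0 : n = 0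
            · subst hn0
              simp [Finsupp.single_apply] at h0
              omega
            · simp [Finsupp.single_apply, Ne.symm hn0] at hn
          rw [if_neg hle, zero_add]
          have hXsucc : (X (n + 1) : PP) = monomial (Finsupp.single (n + 1) 1) 1 := by
            rw [← X_pow_eq_monomial, pow_one]
          rw [hXsucc, coeff_monomial_mul']
          have hle2 : ¬ (Finsupp.single (n + 1) 1 ≤ Finsupp.single (0 : ℕ) k) := by
            intro hle2
            have := hle2 (n + 1)
            simp [Finsupp.single_apply] at this
          rw [if_neg hle2]

/-- For every `n ≥ 1`, `x₁ⁿ` is a cycle for Mahowald's differential, and it is a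
boundary if and only if `n ≥ 3`. -/
theorem mahowald_x1_pow
    (d : Derivation (ZMod 2) PP PP)
    (h1 : d (X 0) = 0)
    (hs : ∀ n : ℕ, d (X (n + 1)) = X 0 * (X n) ^ 2) :
    ∀ n : ℕ, 1 ≤ n →
      d ((X 0) ^ n) = 0 ∧ ((∃ z : PP, d z = (X 0) ^ n) ↔ 3 ≤ n) := by
  intro n hn
  have hcycle : ∀ m : ℕ, d ((X 0 : PP) ^ m) = 0 := by
    intro m
    rw [d.leibniz_pow, h1, smul_zero, smul_zero]
  refine ⟨hcycle n, ?_, ?_⟩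
  · rintro ⟨z, hz⟩
    by_contra h3
    have hk : n ≤ 2 := by omega
    have h0 := coeff_d_low d h1 hs z n hk
    rw [hz, X_pow_eq_monomial, coeff_monomial, if_pos rfl] at h0
    exact one_ne_zero h0
  · intro h3
    refine ⟨(X 0 : PP) ^ (n - 3) * X 1, ?_⟩
    rw [d.leibniz, hcycle (n - 3), smul_zero, add_zero, smul_eq_mul, hs 0]
    have h30 : (X 0 : PP) * X 0 ^ 2 = X 0 ^ 3 := by ring
    rw [h30, ← pow_add]
    congr 1
    omega
end

section
/- Let $B = \mathbb{F}_2[w, w^{-1}, h, x_1, x_2, \ldots]$ with the derivation $D(w) = h^3$, $D(h) = D(x_1) = 0$, $D(x_n) = w^{-2} h x_1 x_{n-1}^2$ for $n \geq 2$. Suppose instead one defined $D'(x_n) = w^{-2} h x_1 x_{n-1}^2 + w^{-1} h^3 x_n$ for some fixed $n \geq 2$ (and $D'$ agreeing with $D$ on all other generators). Then $D' \circ D' \neq 0$; in particular $(D')^2(w x_n) = w^{-2} h^4 x_1 x_{n-1}^2 \neq 0$. -/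
/-- `B = 𝔽₂[w^{±1}, h, x₁, x₂, …]`, realized as the monoid algebra of
`ℤ × ℕ × (ℕ →₀ ℕ)` over `𝔽₂`: the `ℤ`-coordinate records the exponent of the
invertible generator `w`, the `ℕ`-coordinate the exponent of `h`, and the
`(n-1)`-st coordinate of the `Finsupp` the exponent of `xₙ` (for `n ≥ 1`). -/
abbrev LB : Type := AddMonoidAlgebra (ZMod 2) (ℤ × ℕ × (ℕ →₀ ℕ))

noncomputable def bw : LB := AddMonoidAlgebra.of' (ZMod 2) (ℤ × ℕ × (ℕ →₀ ℕ)) (1, 0, 0)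
noncomputable def bwinv : LB := AddMonoidAlgebra.of' (ZMod 2) (ℤ × ℕ × (ℕ →₀ ℕ)) (-1, 0, 0)
noncomputable def bh : LB := AddMonoidAlgebra.of' (ZMod 2) (ℤ × ℕ × (ℕ →₀ ℕ)) (0, 1, 0)
/-- `bx n` is the generator `xₙ`, for `n ≥ 1`. -/
noncomputable def bx (n : ℕ) : LB :=
  AddMonoidAlgebra.of' (ZMod 2) (ℤ × ℕ × (ℕ →₀ ℕ)) (0, 0, Finsupp.single (n - 1) 1)

lemma LB.add_self (x : LB) : x + x = 0 := by
  have h : (2 : ZMod 2) • x = x + x := by rw [two_smul]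
  have h2 : (2 : ZMod 2) = 0 := rfl
  rw [h2, zero_smul] at h
  exact h.symm

lemma LB.eq_of_add_eq_zero {a b : LB} (h : a + b = 0) : a = b := by
  have : a = (a + b) + b := by rw [add_assoc, LB.add_self, add_zero]
  rw [h, zero_add] at this
  exact this

lemma of'_mul (a b : ℤ × ℕ × (ℕ →₀ ℕ)) :
    AddMonoidAlgebra.of' (ZMod 2) _ a * AddMonoidAlgebra.of' (ZMod 2) _ b
      = AddMonoidAlgebra.of' (ZMod 2) _ (a + b) := by
  simp [AddMonoidAlgebra.of'_apply, AddMonoidAlgebra.single_mul_single]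

lemma of'_ne_zero (a : ℤ × ℕ × (ℕ →₀ ℕ)) :
    AddMonoidAlgebra.of' (ZMod 2) _ a ≠ 0 := by
  rw [AddMonoidAlgebra.of'_apply]
  simpa using (Finsupp.single_eq_zero (a := a) (b := (1 : ZMod 2))).not.mpr one_ne_zero

lemma bw_bwinv : bw * bwinv = 1 := by
  rw [bw, bwinv, of'_mul]
  norm_num [AddMonoidAlgebra.of'_apply]; rfl

/-- If for some fixed `n₀ ≥ 2` one instead set
`D'(x_{n₀}) = w⁻² h x₁ x_{n₀-1}² + w⁻¹ h³ x_{n₀}` (with `D'` agreeing with the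
derivation `D` of the main conjecture on all other generators), then
`D' ∘ D' ≠ 0`; in particular `(D')²(w x_{n₀}) = w⁻² h⁴ x₁ x_{n₀-1}² ≠ 0`. -/
theorem alternative_d3_not_a_differential
    (n₀ : ℕ) (hn₀ : 2 ≤ n₀)
    (D' : Derivation (ZMod 2) LB LB)
    (hw : D' bw = bh ^ 3)
    (hh : D' bh = 0)
    (hx1 : D' (bx 1) = 0)
    (hxn : ∀ n : ℕ, 2 ≤ n → n ≠ n₀ →
      D' (bx n) = bwinv ^ 2 * bh * bx 1 * (bx (n - 1)) ^ 2)
    (hxn₀ : D' (bx n₀) =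
      bwinv ^ 2 * bh * bx 1 * (bx (n₀ - 1)) ^ 2 + bwinv * bh ^ 3 * bx n₀) :
    D' (D' (bw * bx n₀)) = bwinv ^ 2 * bh ^ 4 * bx 1 * (bx (n₀ - 1)) ^ 2 ∧
    bwinv ^ 2 * bh ^ 4 * bx 1 * (bx (n₀ - 1)) ^ 2 ≠ 0 ∧
    ∃ p : LB, D' (D' p) ≠ 0 := by
  have hwinv : D' bwinv = bwinv ^ 2 * bh ^ 3 := by
    have h0 : D' (bw * bwinv) = 0 := by rw [bw_bwinv]; exact Derivation.map_one_eq_zero D'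
    rw [Derivation.leibniz, smul_eq_mul, smul_eq_mul, hw] at h0
    have h1 : bwinv * (bw * D' bwinv + bwinv * bh ^ 3) = 0 := by rw [h0, mul_zero]
    have h2 : D' bwinv + bwinv ^ 2 * bh ^ 3 = 0 := by
      have hb : bwinv * bw = 1 := by rw [mul_comm]; exact bw_bwinv
      calc D' bwinv + bwinv ^ 2 * bh ^ 3
          = (bwinv * bw) * D' bwinv + bwinv ^ 2 * bh ^ 3 := by rw [hb, one_mul]
        _ = bwinv * (bw * D' bwinv + bwinv * bh ^ 3) := by ring
        _ = 0 := h1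
    exact LB.eq_of_add_eq_zero h2
  have hsq : D' (bx (n₀ - 1) ^ 2) = 0 := by
    rw [pow_two, Derivation.leibniz, smul_eq_mul, LB.add_self]
  have step1 : D' (bw * bx n₀) = bwinv * bh * bx 1 * bx (n₀ - 1) ^ 2 := by
    rw [Derivation.leibniz, smul_eq_mul, smul_eq_mul, hw, hxn₀]
    have e : bw * (bwinv ^ 2 * bh * bx 1 * bx (n₀ - 1) ^ 2 + bwinv * bh ^ 3 * bx n₀)
        + bx n₀ * bh ^ 3
        = bwinv * bh * bx 1 * bx (n₀ - 1) ^ 2 + (bh ^ 3 * bx n₀ + bh ^ 3 * bx n₀) := by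
      linear_combination (bwinv * bh * bx 1 * bx (n₀ - 1) ^ 2 + bh ^ 3 * bx n₀) * bw_bwinv
    rw [e, LB.add_self, add_zero]
  have step2 : D' (bwinv * bh * bx 1 * bx (n₀ - 1) ^ 2)
      = bwinv ^ 2 * bh ^ 4 * bx 1 * bx (n₀ - 1) ^ 2 := by
    simp only [Derivation.leibniz, smul_eq_mul, hwinv, hh, hx1, hsq, mul_zero, zero_add,
      add_zero, zero_mul]
    ring
  have hne : bwinv ^ 2 * bh ^ 4 * bx 1 * bx (n₀ - 1) ^ 2 ≠ 0 := by
    have e : bwinv ^ 2 * bh ^ 4 * bx 1 * bx (n₀ - 1) ^ 2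
        = (bwinv * bwinv) * ((bh * bh) * (bh * bh)) * bx 1 * (bx (n₀ - 1) * bx (n₀ - 1)) := by
      ring
    rw [e]
    simp only [bwinv, bh, bx, of'_mul]
    exact of'_ne_zero _
  exact ⟨by rw [step1, step2], hne, ⟨bw * bx n₀, by rw [step1, step2]; exact hne⟩⟩
end

section
/- Let $P = \mathbb{F}_2[x_1, x_2, \ldots]$ with derivation $d(x_1)=0$, $d(x_i)=x_1x_{i-1}^2$ for $i>1$, and form the complex $C^n$ for $n \geq 0$ defined as follows: $C^n = \bigoplus$ of copies of $P$ indexed by pairs, with differential $d_3^n$ as in the $E_3$-page of the spectral sequence, where for $n \geq 2$ an element of $C^n$ is written $\sum_i v^{m_i} y_i + \sum_j v^{l_j} z_j h^2$ (with $m_i \equiv 2,3 \pmod 4$, $l_j \equiv 0,1 \pmod 4$, $y_i, z_j \in P$) and $d_3^n$ sends $v^m y \mapsto v^{m-2} y h^{3}$-terms plus $v^{m-4} d(y) h$-terms. Then for $n \geq 3$, the complex is exact at position $n$: $\ker(d_3^n) = \operatorname{im}(d_3^{n-1})$. -/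
open MvPolynomial

/-- An element of `E₃(M;Q₁) = 𝔽₂[v^{±1}, h] ⊗ P` is a finitely supported
function `(m, j) ↦ y ∈ P`, recording the coefficient of `v^m h^j`. -/
abbrev E3M : Type := (ℤ × ℕ) →₀ PP

/-- The auxiliary grading: `|v^m h^j| = j + (2 if m ≡ 2,3 (mod 4) else 0)`. -/
def auxGrade (p : ℤ × ℕ) : ℕ :=
  p.2 + (if p.1 % 4 = 2 ∨ p.1 % 4 = 3 then 2 else 0)

/-- The differential `d₃` on `E₃(M;Q₁)`:
`v^m h^j y ↦ [m ≡ 2,3 (4)] v^{m-2} h^{j+3} y + v^{m-4} h^{j+1} d(y)`. -/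
noncomputable def d3M (d : Derivation (ZMod 2) PP PP) (c : E3M) : E3M :=
  c.sum fun p y =>
    (if p.1 % 4 = 2 ∨ p.1 % 4 = 3 then Finsupp.single (p.1 - 2, p.2 + 3) y else 0) +
      Finsupp.single (p.1 - 4, p.2 + 1) (d y)

lemma ite_app (P : Prop) [Decidable P] (f : E3M) (q : ℤ × ℕ) :
    (if P then f else 0) q = if P then f q else 0 := by
  split <;> simp

lemma d3M_apply (d : Derivation (ZMod 2) PP PP) (c : E3M) (q : ℤ × ℕ) :
    d3M d c q =
      (if 3 ≤ q.2 ∧ (q.1 % 4 = 0 ∨ q.1 % 4 = 1) then c (q.1 + 2, q.2 - 3) else 0)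
        + d (if 1 ≤ q.2 then c (q.1 + 4, q.2 - 1) else 0) := by
  classical
  obtain ⟨m, j⟩ := q
  rw [d3M, Finsupp.sum_apply, Finsupp.sum]
  have step : ∀ p ∈ c.support,
      ((if p.1 % 4 = 2 ∨ p.1 % 4 = 3 then Finsupp.single (p.1 - 2, p.2 + 3) (c p) else 0) +
        Finsupp.single (p.1 - 4, p.2 + 1) (d (c p))) (m, j) =
      (if p = ((m + 2 : ℤ), j - 3) then
          (if 3 ≤ j ∧ (m % 4 = 0 ∨ m % 4 = 1) then c p else 0) else 0) +
      (if p = ((m + 4 : ℤ), j - 1) then (if 1 ≤ j then d (c p) else 0) else 0) := by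
    intro p _
    obtain ⟨a, i⟩ := p
    rw [Finsupp.add_apply, ite_app]
    simp only [Finsupp.single_apply, ← ite_and, Prod.mk.injEq]
    congr 1
    · exact if_congr (by omega) rfl rfl
    · exact if_congr (by omega) rfl rfl
  rw [Finset.sum_congr rfl step, Finset.sum_add_distrib,
    Finset.sum_ite_eq' c.support ((m + 2 : ℤ), j - 3),
    Finset.sum_ite_eq' c.support ((m + 4 : ℤ), j - 1)]
  congr 1
  · by_cases hmem : ((m + 2 : ℤ), j - 3) ∈ c.support
    · rw [if_pos hmem]
    · rw [if_neg hmem, Finsupp.notMem_support_iff.1 hmem]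
      split <;> rfl
  · by_cases hmem : ((m + 4 : ℤ), j - 1) ∈ c.support
    · rw [if_pos hmem, apply_ite d, map_zero]
    · rw [if_neg hmem, Finsupp.notMem_support_iff.1 hmem]
      simp

lemma shift_apply (c : E3M) (n : ℕ) (q : ℤ × ℕ) :
    (c.sum fun p y => if p.2 = n then Finsupp.single (p.1 + 2, n - 3) y else 0) q =
      if q.2 = n - 3 then c (q.1 - 2, n) else 0 := by
  classical
  obtain ⟨m, j⟩ := q
  rw [Finsupp.sum_apply, Finsupp.sum]
  have step : ∀ p ∈ c.support,
      (if p.2 = n then Finsupp.single (p.1 + 2, n - 3) (c p) else 0) (m, j) =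
      (if p = ((m - 2 : ℤ), n) then (if j = n - 3 then c p else 0) else 0) := by
    intro p _
    obtain ⟨a, i⟩ := p
    rw [ite_app]
    simp only [Finsupp.single_apply, ← ite_and, Prod.mk.injEq]
    exact if_congr (by omega) rfl rfl
  rw [Finset.sum_congr rfl step, Finset.sum_ite_eq' c.support ((m - 2 : ℤ), n)]
  by_cases hmem : ((m - 2 : ℤ), n) ∈ c.support
  · rw [if_pos hmem]
  · rw [if_neg hmem, Finsupp.notMem_support_iff.1 hmem]
    split <;> rfl

lemma PP_add_self (x : PP) : x + x = 0 := by
  have h11 : (1 + 1 : PP) = 0 := by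
    have h : (1 + 1 : ZMod 2) = 0 := by decide
    rw [← C_1, ← C_add, h, C_0]
  calc x + x = (1 + 1) * x := by ring
    _ = 0 := by rw [h11, zero_mul]


/-- The graded complex `(E_{3,n}, d₃)` is exact at every position `n ≥ 3`:
every cycle concentrated in auxiliary grading `n` is the boundary of an
element concentrated in grading `n - 1`. -/
theorem E3_complex_exact_high_degrees
    (d : Derivation (ZMod 2) PP PP)
    (h1 : d (X 0) = 0)
    (hs : ∀ n : ℕ, d (X (n + 1)) = X 0 * (X n) ^ 2) :
    ∀ n : ℕ, 3 ≤ n → ∀ c : E3M,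
      (∀ p ∈ c.support, auxGrade p = n) → d3M d c = 0 →
      ∃ b : E3M, (∀ p ∈ b.support, auxGrade p = n - 1) ∧ d3M d b = c := by
  intro n hn c hgrade hcyc
  classical
  have hc0 : ∀ q : ℤ × ℕ, auxGrade q ≠ n → c q = 0 := by
    intro q h
    by_contra h'
    exact h (hgrade q (Finsupp.mem_support_iff.2 h'))
  have hz : ∀ q : ℤ × ℕ, d3M d c q = 0 := fun q => by rw [hcyc]; rfl
  refine ⟨c.sum fun p y => if p.2 = n then Finsupp.single (p.1 + 2, n - 3) y else 0, ?_, ?_⟩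
  · intro q hq
    have hbq := Finsupp.mem_support_iff.1 hq
    rw [shift_apply] at hbq
    by_cases hj : q.2 = n - 3
    · rw [if_pos hj] at hbq
      have hg := hgrade _ (Finsupp.mem_support_iff.2 hbq)
      unfold auxGrade at hg ⊢
      dsimp only at hg
      rw [hj]
      split at hg
      · omega
      · rw [if_pos (by omega)]
        omega
    · rw [if_neg hj] at hbq
      exact absurd rfl hbq
  · refine Finsupp.ext fun q => ?_
    obtain ⟨m, j⟩ := q
    rw [d3M_apply]
    dsimp only
    rw [shift_apply, shift_apply]
    dsimp only
    have e1 : (m + 2 - 2 : ℤ) = m := by ring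
    have e2 : (m + 4 - 2 : ℤ) = m + 2 := by ring
    rw [e1, e2]
    by_cases hj1 : j = n
    · rw [hj1]
      by_cases hm : m % 4 = 0 ∨ m % 4 = 1
      · rw [if_pos ⟨by omega, hm⟩, if_pos rfl]
        have t2 : (if 1 ≤ n then (if n - 1 = n - 3 then c (m + 2, n) else 0) else 0) = 0 := by
          split_ifs with h h'
          · exfalso; omega
          · rfl
          · rfl
        rw [t2, map_zero, add_zero]
      · have t2 : (if 1 ≤ n then (if n - 1 = n - 3 then c (m + 2, n) else 0) else 0) = 0 := by
          split_ifs with h h'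
          · exfalso; omega
          · rfl
          · rfl
        rw [if_neg (fun h => hm h.2), t2, map_zero, add_zero]
        exact (hc0 (m, n) (by unfold auxGrade; dsimp only; rw [if_pos (by omega)]; omega)).symm
    · by_cases hj2 : j = n - 2
      · rw [hj2]
        have t1 : (if 3 ≤ n - 2 ∧ (m % 4 = 0 ∨ m % 4 = 1) then
            (if n - 2 - 3 = n - 3 then c (m, n) else 0) else 0) = 0 := by
          split_ifs with h h'
          · exfalso; omega
          · rfl
          · rfl
        rw [t1, zero_add, if_pos (by omega : 1 ≤ n - 2), if_pos (by omega : n - 2 - 1 = n - 3)]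
        by_cases hm : m % 4 = 2 ∨ m % 4 = 3
        · have hcy := hz (m - 2, n + 1)
          rw [d3M_apply] at hcy
          dsimp only at hcy
          rw [if_pos ⟨by omega, by omega⟩, if_pos (by omega)] at hcy
          have f1 : (m - 2 + 2 : ℤ) = m := by ring
          have f2 : (m - 2 + 4 : ℤ) = m + 2 := by ring
          have f3 : n + 1 - 3 = n - 2 := by omega
          have f4 : n + 1 - 1 = n := by omega
          rw [f1, f2, f3, f4] at hcy
          have : c (m, n - 2) = d (c (m + 2, n)) := by
            conv_lhs => rw [← add_zero (c (m, n - 2)), ← hcy]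
            rw [← add_assoc, PP_add_self, zero_add]
          exact this.symm
        · have e3 : c (m, n - 2) = 0 :=
            hc0 _ (by unfold auxGrade; dsimp only; rw [if_neg (by omega)]; omega)
          have e4 : c (m + 2, n) = 0 :=
            hc0 _ (by unfold auxGrade; dsimp only; rw [if_pos (by omega)]; omega)
          rw [e3, e4, map_zero]
      · have t1 : (if 3 ≤ j ∧ (m % 4 = 0 ∨ m % 4 = 1) then
            (if j - 3 = n - 3 then c (m, n) else 0) else 0) = 0 := by
          split_ifs with h h'
          · exfalso; omega
          · rfl
          · rfl
        have t2 : (if 1 ≤ j then (if j - 1 = n - 3 then c (m + 2, n) else 0) else 0) = 0 := by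
          split_ifs with h h'
          · exfalso; omega
          · rfl
          · rfl
        rw [t1, t2, map_zero, add_zero]
        exact (hc0 (m, j) (by unfold auxGrade; dsimp only; split <;> omega)).symm
end

section
/- Let $P = \mathbb{F}_2[x_1, x_2, \ldots]$ with derivation $d(x_1)=0$, $d(x_i) = x_1 x_{i-1}^2$ for $i > 1$. Then $\ker d$ is a subring of $P$, $\operatorname{im} d$ is an ideal of $\ker d$, and the homology $H(d) = \ker d/\operatorname{im} d$ is a commutative $\mathbb{F}_2$-algebra containing the classes of $1$, $x_1$, $x_1^2$, $x_2^2$, which are pairwise distinct and nonzero. -/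
open MvPolynomial

/-- The four homology classes `1, x₁, x₁², x₂²`. -/
noncomputable def fourCycles : Fin 4 → PP := ![1, X 0, (X 0) ^ 2, (X 1) ^ 2]

/-- The ideal of polynomials all of whose monomials have degree `≥ 3`. -/
noncomputable def Jideal : Ideal PP where
  carrier := {p | ∀ m : ℕ →₀ ℕ, (m.sum fun _ e => e) < 3 → coeff m p = 0}
  zero_mem' := by intro m _; simp
  add_mem' := by
    intro a b ha hb m hm
    rw [coeff_add, ha m hm, hb m hm, add_zero]
  smul_mem' := by
    intro c p hp m hm
    rw [smul_eq_mul, coeff_mul]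
    apply Finset.sum_eq_zero
    intro x hx
    have hx2 : x.1 + x.2 = m := Finset.HasAntidiagonal.mem_antidiagonal.mp hx
    have hle : (x.2.sum fun _ e => e) ≤ m.sum fun _ e => e := by
      rw [← hx2, Finsupp.sum_add_index' (fun _ => rfl) (fun _ _ _ => rfl)]
      exact le_add_self
    rw [hp x.2 (lt_of_le_of_lt hle hm), mul_zero]

lemma mem_Jideal (p : PP) :
    p ∈ Jideal ↔ ∀ m : ℕ →₀ ℕ, (m.sum fun _ e => e) < 3 → coeff m p = 0 := Iff.rfl

lemma X0_mul_sq (n : ℕ) :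
    (X 0 * X n ^ 2 : PP) ∈ Jideal := by
  rw [mem_Jideal]
  intro m hm
  have : (X 0 * X n ^ 2 : PP)
      = monomial (Finsupp.single 0 1 + Finsupp.single n 2) 1 := by
    rw [← pow_one (X 0 : PP), X_pow_eq_monomial, X_pow_eq_monomial, monomial_mul, one_mul]
  rw [this, coeff_monomial]
  split
  · next h =>
    exfalso
    have : ((Finsupp.single 0 1 + Finsupp.single n 2 : ℕ →₀ ℕ).sum fun _ e => e) = 3 := by
      rw [Finsupp.sum_add_index' (fun _ => rfl) (fun _ _ _ => rfl),
        Finsupp.sum_single_index rfl, Finsupp.sum_single_index rfl]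
    rw [h] at this
    omega
  · rfl

/-- `ker d` is a subring of `P`, `im d` is an ideal of `ker d`, and the classes
of `1, x₁, x₁², x₂²` in the homology `H(d) = ker d / im d` are nonzero and
pairwise distinct (in characteristic 2, distinctness of classes means the sum
of representatives is not a boundary). -/
theorem mahowald_homology_classes
    (d : Derivation (ZMod 2) PP PP)
    (h1 : d (X 0) = 0)
    (hs : ∀ n : ℕ, d (X (n + 1)) = X 0 * (X n) ^ 2) :
    -- ker d is a subring
    (d 1 = 0 ∧ ∀ a b : PP, d a = 0 → d b = 0 → d (a + b) = 0 ∧ d (a * b) = 0) ∧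
    -- im d is an ideal of ker d: it lands in ker d and is stable under
    -- multiplication by elements of ker d
    (∀ a : PP, d (d a) = 0) ∧
    (∀ a c : PP, d c = 0 → ∃ b : PP, c * d a = d b) ∧
    -- the four listed elements are cycles
    (∀ i : Fin 4, d (fourCycles i) = 0) ∧
    -- their homology classes are nonzero …
    (∀ i : Fin 4, ¬ ∃ z : PP, d z = fourCycles i) ∧
    -- … and pairwise distinct
    (∀ i j : Fin 4, i ≠ j → ¬ ∃ z : PP, d z = fourCycles i + fourCycles j) := by
  have hsq : ∀ p : PP, d (p ^ 2) = 0 := by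
    intro p
    rw [pow_two, Derivation.leibniz]
    exact CharTwo.add_self_eq_zero _
  have hddX : ∀ n : ℕ, d (d (X n)) = 0 := by
    intro n
    cases n with
    | zero => rw [h1, map_zero]
    | succ k =>
      rw [hs, Derivation.leibniz, h1, hsq, smul_zero, smul_zero, add_zero]
  have hdd : ∀ a : PP, d (d a) = 0 := by
    intro a
    induction a using MvPolynomial.induction_on with
    | C r =>
      have : d (C r : PP) = 0 := by
        rw [show (C r : PP) = algebraMap (ZMod 2) PP r from rfl, Derivation.map_algebraMap]
      rw [this, map_zero]
    | add p q hp hq => rw [map_add, map_add, hp, hq, add_zero]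
    | mul_X p n hp =>
      rw [Derivation.leibniz, smul_eq_mul, smul_eq_mul, map_add,
        Derivation.leibniz, Derivation.leibniz, hp, hddX n]
      simp only [smul_eq_mul, mul_zero, smul_zero, zero_add, add_zero]
      rw [mul_comm (d (X n)) (d p)]
      exact CharTwo.add_self_eq_zero (d p * d (X n))
  have hmem : ∀ z : PP, d z ∈ Jideal := by
    intro z
    induction z using MvPolynomial.induction_on with
    | C r =>
      rw [show (C r : PP) = algebraMap (ZMod 2) PP r from rfl, Derivation.map_algebraMap]
      exact Jideal.zero_mem
    | add p q hp hq => rw [map_add]; exact Jideal.add_mem hp hq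
    | mul_X p n hp =>
      rw [Derivation.leibniz, smul_eq_mul, smul_eq_mul]
      refine Jideal.add_mem (Ideal.mul_mem_left _ _ ?_) (Ideal.mul_mem_left _ _ hp)
      cases n with
      | zero => rw [h1]; exact Jideal.zero_mem
      | succ k => rw [hs]; exact X0_mul_sq k
  have main : ∀ (c : PP) (m : ℕ →₀ ℕ), (m.sum fun _ e => e) < 3 → coeff m c ≠ 0 →
      ¬ ∃ z : PP, d z = c := by
    rintro c m hm hc ⟨z, hz⟩
    exact hc (hz ▸ hmem z m hm)
  have hm0 : (((0 : ℕ →₀ ℕ)).sum fun _ e => e) < 3 := by simp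
  have hm1 : ((Finsupp.single (0 : ℕ) 1).sum fun _ e => e) < 3 := by
    rw [Finsupp.sum_single_index rfl]; omega
  have hm2 : ((Finsupp.single (0 : ℕ) 2).sum fun _ e => e) < 3 := by
    rw [Finsupp.sum_single_index rfl]; omega
  have hm3 : ((Finsupp.single (1 : ℕ) 2).sum fun _ e => e) < 3 := by
    rw [Finsupp.sum_single_index rfl]; omega
  refine ⟨⟨Derivation.map_one_eq_zero d, ?_⟩, hdd, ?_, ?_, ?_, ?_⟩
  · intro a b ha hb
    refine ⟨by rw [map_add, ha, hb, add_zero], ?_⟩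
    rw [Derivation.leibniz, ha, hb, smul_zero, smul_zero, add_zero]
  · intro a c hc
    refine ⟨c * a, ?_⟩
    rw [Derivation.leibniz, hc, smul_zero, add_zero, smul_eq_mul]
  · intro i
    fin_cases i
    · simpa [fourCycles] using Derivation.map_one_eq_zero d
    · simpa [fourCycles] using h1
    · simpa [fourCycles] using hsq (X 0)
    · simpa [fourCycles] using hsq (X 1)
  · intro i
    fin_cases i
    · exact main _ 0 hm0 (by simp [fourCycles, coeff_one])
    · exact main _ (Finsupp.single 0 1) hm1 (by simp [fourCycles, coeff_X'])
    · exact main _ (Finsupp.single 0 2) hm2 (by simp [fourCycles, coeff_X_pow])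
    · exact main _ (Finsupp.single 1 2) hm3 (by simp [fourCycles, coeff_X_pow])
  · intro i j hij
    fin_cases i <;> fin_cases j
    · exact absurd rfl hij
    · exact main _ 0 hm0 (by simp [fourCycles, coeff_one, coeff_X', coeff_X_pow,
        Finsupp.single_eq_zero])
    · exact main _ 0 hm0 (by simp [fourCycles, coeff_one, coeff_X', coeff_X_pow,
        Finsupp.single_eq_zero])
    · exact main _ 0 hm0 (by simp [fourCycles, coeff_one, coeff_X', coeff_X_pow,
        Finsupp.single_eq_zero])
    · exact main _ 0 hm0 (by simp [fourCycles, coeff_one, coeff_X', coeff_X_pow,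
        Finsupp.single_eq_zero])
    · exact absurd rfl hij
    · exact main _ (Finsupp.single 0 1) hm1 (by simp [fourCycles, coeff_one, coeff_X',
        coeff_X_pow, Finsupp.single_eq_single_iff, Finsupp.single_eq_zero])
    · exact main _ (Finsupp.single 0 1) hm1 (by simp [fourCycles, coeff_one, coeff_X',
        coeff_X_pow, Finsupp.single_eq_single_iff, Finsupp.single_eq_zero])
    · exact main _ 0 hm0 (by simp [fourCycles, coeff_one, coeff_X', coeff_X_pow,
        Finsupp.single_eq_zero])
    · exact main _ (Finsupp.single 0 1) hm1 (by simp [fourCycles, coeff_one, coeff_X',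
        coeff_X_pow, Finsupp.single_eq_single_iff, Finsupp.single_eq_zero])
    · exact absurd rfl hij
    · exact main _ (Finsupp.single 0 2) hm2 (by simp [fourCycles, coeff_one, coeff_X',
        coeff_X_pow, Finsupp.single_eq_single_iff, Finsupp.single_eq_zero])
    · exact main _ 0 hm0 (by simp [fourCycles, coeff_one, coeff_X', coeff_X_pow,
        Finsupp.single_eq_zero])
    · exact main _ (Finsupp.single 0 1) hm1 (by simp [fourCycles, coeff_one, coeff_X',
        coeff_X_pow, Finsupp.single_eq_single_iff, Finsupp.single_eq_zero])
    · exact main _ (Finsupp.single 0 2) hm2 (by simp [fourCycles, coeff_one, coeff_X',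
        coeff_X_pow, Finsupp.single_eq_single_iff, Finsupp.single_eq_zero])
    · exact absurd rfl hij
end
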